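/- Let B = {1,2,3,4} ∪ ⋃_{k≥2} {3^k+1, 3^k+2}, and define a_n = 1 if n ∈ B and a_n = 3 otherwise. With f(1)=1 and f(n)=a_1⋯a_{n-1} for n ≥ 2, one has lim_n f(n)^{1/n} = 3 and ∑_{n≥1} f(n) 3^{-n} < 1. -/

import Mathlib

open scoped BigOperators
open Filter Finset

private def Sf15 (k : ℕ) : Finset ℕ :=
  ({1, 2, 3, 4} : Finset ℕ) ∪ (Finset.Icc 2 k).biUnion (fun j => {3 ^ j + 1, 3 ^ j + 2})

private lemma Sf15_one_le {k i : ℕ} (hi : i ∈ Sf15 k) : 1 ≤ i := by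
  simp only [Sf15, Finset.mem_union, Finset.mem_biUnion, Finset.mem_insert,
    Finset.mem_singleton, Finset.mem_Icc] at hi
  rcases hi with h | ⟨j, _, h⟩
  · omega
  · have : 1 ≤ 3 ^ j := Nat.one_le_pow _ _ (by norm_num)
    omega

private lemma Sf15_le {k i : ℕ} (hk : 1 ≤ k) (hi : i ∈ Sf15 k) : i ≤ 3 ^ k + 2 := by
  have h3 : (3:ℕ) ≤ 3 ^ k := by
    calc (3:ℕ) = 3 ^ 1 := (pow_one 3).symm
    _ ≤ 3 ^ k := Nat.pow_le_pow_right (by norm_num) hk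
  simp only [Sf15, Finset.mem_union, Finset.mem_biUnion, Finset.mem_insert,
    Finset.mem_singleton, Finset.mem_Icc] at hi
  rcases hi with h | ⟨j, hj, h⟩
  · omega
  · have : 3 ^ j ≤ 3 ^ k := Nat.pow_le_pow_right (by norm_num) hj.2
    omega

private lemma Sf15_card_le (k : ℕ) : (Sf15 k).card ≤ 2 * k + 4 := by
  calc (Sf15 k).card ≤ ({1,2,3,4} : Finset ℕ).card +
      ((Finset.Icc 2 k).biUnion (fun j => {3 ^ j + 1, 3 ^ j + 2})).card :=
    Finset.card_union_le _ _
  _ ≤ 4 + ∑ j ∈ Finset.Icc 2 k, ({3 ^ j + 1, 3 ^ j + 2} : Finset ℕ).card := by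
      gcongr
      · decide
      · exact Finset.card_biUnion_le
  _ ≤ 4 + ∑ j ∈ Finset.Icc 2 k, 2 := by
      gcongr with j hj
      exact Finset.card_insert_le _ _
  _ ≤ 2 * k + 4 := by
      rw [Finset.sum_const, Nat.card_Icc, smul_eq_mul]
      omega

private lemma Sf15_card_ge : ∀ k : ℕ, 1 ≤ k → 2 * k + 2 ≤ (Sf15 k).card := by
  intro k
  induction k with
  | zero => omega
  | succ k ih =>
    intro _
    rcases Nat.eq_or_lt_of_le (Nat.one_le_iff_ne_zero.mpr (Nat.succ_ne_zero k)) with h | h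
    · have : k = 0 := by omega
      subst this
      decide
    · have hk1 : 1 ≤ k := by omega
      have hcard := ih hk1
      have hlt : 3 ^ k + 2 < 3 ^ (k + 1) + 1 := by
        have e : 3 ^ (k + 1) = 3 * 3 ^ k := by ring
        have h1 : 1 ≤ 3 ^ k := Nat.one_le_pow _ _ (by norm_num)
        omega
      have hy : (3 ^ (k+1) + 2) ∉ Sf15 k := fun hmem => by
        have := Sf15_le hk1 hmem; omega
      have hx : (3 ^ (k+1) + 1) ∉ insert (3 ^ (k+1) + 2) (Sf15 k) := by
        simp only [Finset.mem_insert]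
        push_neg
        exact ⟨by omega, fun hmem => by have := Sf15_le hk1 hmem; omega⟩
      have hsub : insert (3 ^ (k+1) + 1) (insert (3 ^ (k+1) + 2) (Sf15 k)) ⊆ Sf15 (k+1) := by
        intro i hi
        simp only [Finset.mem_insert] at hi
        rcases hi with rfl | rfl | hi
        · simp only [Sf15, Finset.mem_union, Finset.mem_biUnion, Finset.mem_Icc]
          right
          exact ⟨k+1, ⟨by omega, le_refl _⟩, by simp⟩
        · simp only [Sf15, Finset.mem_union, Finset.mem_biUnion, Finset.mem_Icc]
          right
          exact ⟨k+1, ⟨by omega, le_refl _⟩, by simp⟩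
        · simp only [Sf15, Finset.mem_union, Finset.mem_biUnion, Finset.mem_Icc] at hi ⊢
          rcases hi with h' | ⟨j, hj, h'⟩
          · exact Or.inl h'
          · exact Or.inr ⟨j, ⟨hj.1, by omega⟩, h'⟩
      have := Finset.card_le_card hsub
      rw [Finset.card_insert_of_notMem hx, Finset.card_insert_of_notMem hy] at this
      omega

private lemma two_mul_add_one_le_pow : ∀ k : ℕ, 2 * k + 1 ≤ 3 ^ k := by
  intro k
  induction k with
  | zero => norm_num
  | succ k ih =>
    have e : 3 ^ (k + 1) = 3 * 3 ^ k := by ring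
    omega

private lemma cast_sub_ge (m n : ℕ) : (m : ℝ) - n ≤ ((m - n : ℕ) : ℝ) := by
  rcases le_total n m with h | h
  · rw [Nat.cast_sub h]
  · have h0 : m - n = 0 := Nat.sub_eq_zero_of_le h
    rw [h0]
    simp only [Nat.cast_zero]
    have : (m:ℝ) ≤ n := by exact_mod_cast h
    linarith

set_option maxHeartbeats 1000000 in
theorem stmt15 (B : Set ℕ)
    (hB : B = {1, 2, 3, 4} ∪ {m | ∃ k, 2 ≤ k ∧ (m = 3 ^ k + 1 ∨ m = 3 ^ k + 2)})
    (a : ℕ → ℕ)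
    (ha1 : ∀ n, n ∈ B → a n = 1) (ha3 : ∀ n, n ∉ B → a n = 3)
    (f : ℕ → ℕ)
    (hf : ∀ n, 1 ≤ n → f n = ∏ i ∈ Finset.Icc 1 (n - 1), a i) :
    Filter.Tendsto (fun n : ℕ => (f n : ℝ) ^ ((1 : ℝ) / (n : ℝ))) Filter.atTop (nhds 3) ∧
    Summable (fun n : ℕ => (f (n + 1) : ℝ) / 3 ^ (n + 1)) ∧
    ∑' n : ℕ, (f (n + 1) : ℝ) / 3 ^ (n + 1) < 1 := by
  classical
  have haU : ∀ i, a i ≤ 3 := by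
    intro i
    rcases em (i ∈ B) with h | h
    · rw [ha1 i h]; omega
    · rw [ha3 i h]
  have haL : ∀ i, 1 ≤ a i := by
    intro i
    rcases em (i ∈ B) with h | h
    · rw [ha1 i h]
    · rw [ha3 i h]; omega
  -- upper bound on products
  have prodLe : ∀ (n : ℕ) (S : Finset ℕ), S ⊆ Finset.Icc 1 n → (∀ i ∈ S, i ∈ B) →
      ∏ i ∈ Finset.Icc 1 n, a i ≤ 3 ^ (n - S.card) := by
    intro n S hS hSB
    rw [← Finset.prod_sdiff hS, Finset.prod_eq_one (fun i hi => ha1 i (hSB i hi)), mul_one]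
    calc ∏ i ∈ Finset.Icc 1 n \ S, a i ≤ 3 ^ (Finset.Icc 1 n \ S).card :=
          Finset.prod_le_pow_card _ _ 3 (fun i _ => haU i)
    _ = 3 ^ (n - S.card) := by
        rw [Finset.card_sdiff_of_subset hS, Nat.card_Icc]
        congr 1
  -- lower bound on products
  have prodGe : ∀ (n : ℕ) (T : Finset ℕ), (∀ i ∈ Finset.Icc 1 n, i ∈ B → i ∈ T) →
      3 ^ (n - T.card) ≤ ∏ i ∈ Finset.Icc 1 n, a i := by
    intro n T hT
    set T' := T ∩ Finset.Icc 1 n with hT'def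
    have hsub : T' ⊆ Finset.Icc 1 n := Finset.inter_subset_right
    rw [← Finset.prod_sdiff hsub]
    have h3 : ∀ i ∈ Finset.Icc 1 n \ T', a i = 3 := by
      intro i hi
      rw [Finset.mem_sdiff] at hi
      refine ha3 i (fun hiB => ?_)
      exact hi.2 (Finset.mem_inter.mpr ⟨hT i hi.1 hiB, hi.1⟩)
    have hprod3 : ∏ i ∈ Finset.Icc 1 n \ T', a i = 3 ^ (Finset.Icc 1 n \ T').card := by
      rw [Finset.prod_congr rfl h3, Finset.prod_const]
    have hcard : n - T.card ≤ (Finset.Icc 1 n \ T').card := by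
      rw [Finset.card_sdiff_of_subset hsub, Nat.card_Icc]
      have : T'.card ≤ T.card := Finset.card_le_card Finset.inter_subset_left
      omega
    calc (3:ℕ) ^ (n - T.card) ≤ 3 ^ (Finset.Icc 1 n \ T').card :=
          Nat.pow_le_pow_right (by norm_num) hcard
    _ = (∏ i ∈ Finset.Icc 1 n \ T', a i) * 1 := by rw [hprod3, mul_one]
    _ ≤ (∏ i ∈ Finset.Icc 1 n \ T', a i) * ∏ i ∈ T', a i := by
        exact Nat.mul_le_mul_left _ (Finset.one_le_prod' (fun i _ => haL i))
  have hfpos : ∀ n, 1 ≤ n → 1 ≤ f n := by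
    intro n hn
    rw [hf n hn]
    exact Finset.one_le_prod' (fun i _ => haL i)
  -- membership lemmas
  have hmemB : ∀ i : ℕ, i ∈ Sf15 0 ∨ (∃ j, 2 ≤ j ∧ (i = 3 ^ j + 1 ∨ i = 3 ^ j + 2)) → True := fun _ _ => trivial
  have hSfB : ∀ k, ∀ i ∈ Sf15 k, i ∈ B := by
    intro k i hi
    rw [hB]
    simp only [Sf15, Finset.mem_union, Finset.mem_biUnion, Finset.mem_insert,
      Finset.mem_singleton, Finset.mem_Icc] at hi
    rcases hi with h | ⟨j, hj, h⟩
    · left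
      simp only [Set.mem_insert_iff, Set.mem_singleton_iff]
      tauto
    · right
      exact ⟨j, hj.1, h⟩
  -- Part A
  have h3pos : (0:ℝ) < 3 := by norm_num
  have hlog3 : (0:ℝ) < Real.log 3 := Real.log_pos (by norm_num)
  have hup : ∀ n : ℕ, 1 ≤ n → (f n : ℝ) ≤ 3 ^ n := by
    intro n hn
    have h := prodLe (n-1) ∅ (Finset.empty_subset _) (by simp)
    rw [← hf n hn] at h
    have h2 : f n ≤ 3 ^ (n-1) := by simpa using h
    calc (f n : ℝ) ≤ (3:ℝ) ^ (n-1) := by exact_mod_cast h2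
    _ ≤ 3 ^ n := by
        apply pow_le_pow_right₀ (by norm_num)
        omega
  have hlow : ∀ n : ℕ, 1 ≤ n →
      (3:ℝ) ^ ((n - 1) - (2 * Nat.log 3 n + 4)) ≤ (f n : ℝ) := by
    intro n hn
    set L := Nat.log 3 n with hLdef
    have hT : ∀ i ∈ Finset.Icc 1 (n-1), i ∈ B → i ∈ Sf15 L := by
      intro i hi hiB
      rw [hB] at hiB
      simp only [Set.mem_union, Set.mem_insert_iff, Set.mem_setOf_eq,
        Set.mem_singleton_iff] at hiB
      rcases hiB with h | ⟨j, hj2, hj⟩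
      · simp only [Sf15, Finset.mem_union, Finset.mem_insert, Finset.mem_singleton]
        tauto
      · rw [Finset.mem_Icc] at hi
        have h3j : 3 ^ j ≤ n := by
          have h1 : 1 ≤ 3 ^ j := Nat.one_le_pow _ _ (by norm_num)
          omega
        have hjL : j ≤ L := (Nat.le_log_iff_pow_le (by norm_num) (by omega)).mpr h3j
        simp only [Sf15, Finset.mem_union, Finset.mem_biUnion, Finset.mem_Icc,
          Finset.mem_insert, Finset.mem_singleton]
        exact Or.inr ⟨j, ⟨hj2, hjL⟩, by tauto⟩
    have h := prodGe (n-1) (Sf15 L) hT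
    rw [← hf n hn] at h
    have hcard := Sf15_card_le L
    have hmono : (n-1) - (2*L+4) ≤ (n-1) - (Sf15 L).card := Nat.sub_le_sub_left hcard _
    have h2 : 3 ^ ((n-1) - (2*L+4)) ≤ f n :=
      le_trans (Nat.pow_le_pow_right (by norm_num) hmono) h
    exact_mod_cast h2
  have hLdiv : Filter.Tendsto (fun n : ℕ => (Nat.log 3 n : ℝ) / n) atTop (nhds 0) := by
    have hlogdiv : Filter.Tendsto (fun x : ℝ => Real.log x / x) atTop (nhds 0) :=
      Real.isLittleO_log_id_atTop.tendsto_div_nhds_zero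
    have hnat : Filter.Tendsto (fun n : ℕ => Real.log n / n) atTop (nhds 0) :=
      hlogdiv.comp tendsto_natCast_atTop_atTop
    have hub : Filter.Tendsto (fun n : ℕ => (Real.log n / n) * (Real.log 3)⁻¹) atTop (nhds 0) := by
      simpa using hnat.mul_const (Real.log 3)⁻¹
    apply tendsto_of_tendsto_of_tendsto_of_le_of_le' tendsto_const_nhds hub
    · filter_upwards with n
      positivity
    · filter_upwards [eventually_ge_atTop 1] with n hn
      have hpow : (3:ℝ) ^ (Nat.log 3 n) ≤ n := by
        exact_mod_cast Nat.pow_log_le_self 3 (by omega)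
      have hlogle : (Nat.log 3 n : ℝ) * Real.log 3 ≤ Real.log n := by
        calc (Nat.log 3 n : ℝ) * Real.log 3 = Real.log ((3:ℝ) ^ (Nat.log 3 n)) :=
              (Real.log_pow _ _).symm
        _ ≤ Real.log n := Real.log_le_log (by positivity) hpow
      have hLle : (Nat.log 3 n : ℝ) ≤ Real.log n / Real.log 3 := by
        rw [le_div_iff₀ hlog3]
        exact hlogle
      have hn0 : (0:ℝ) < n := by exact_mod_cast hn
      calc (Nat.log 3 n : ℝ) / n ≤ (Real.log n / Real.log 3) / n := by gcongr
      _ = (Real.log n / n) * (Real.log 3)⁻¹ := by ring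
  have hkey : Filter.Tendsto (fun n : ℕ => (1 / (n:ℝ)) * Real.log (f n)) atTop
      (nhds (Real.log 3)) := by
    have h1 : Filter.Tendsto (fun n : ℕ => (2 * (Nat.log 3 n : ℝ) + 5) / n) atTop (nhds 0) := by
      have h1' := (hLdiv.const_mul 2).add (tendsto_one_div_atTop_nhds_zero_nat.const_mul 5)
      norm_num at h1'
      apply h1'.congr
      intro n
      ring
    have hlowseq : Filter.Tendsto
        (fun n : ℕ => (1 - (2 * (Nat.log 3 n : ℝ) + 5) / n) * Real.log 3)
        atTop (nhds (Real.log 3)) := by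
      have h2 := ((tendsto_const_nhds : Filter.Tendsto (fun _ : ℕ => (1:ℝ)) atTop (nhds 1)).sub h1).mul_const (Real.log 3)
      norm_num at h2
      exact h2
    apply tendsto_of_tendsto_of_tendsto_of_le_of_le' hlowseq tendsto_const_nhds
    · filter_upwards [eventually_ge_atTop 1] with n hn
      have hn0 : (0:ℝ) < n := by exact_mod_cast hn
      have hn0' : (n:ℝ) ≠ 0 := ne_of_gt hn0
      have hflog : ((n:ℝ) - (2 * Nat.log 3 n + 5)) * Real.log 3 ≤ Real.log (f n) := by
        have h := hlow n hn
        have hlogge : (((n-1) - (2 * Nat.log 3 n + 4) : ℕ) : ℝ) * Real.log 3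
            ≤ Real.log (f n) := by
          calc (((n-1) - (2 * Nat.log 3 n + 4) : ℕ) : ℝ) * Real.log 3
              = Real.log ((3:ℝ) ^ ((n-1) - (2 * Nat.log 3 n + 4))) := (Real.log_pow _ _).symm
          _ ≤ Real.log (f n) := Real.log_le_log (by positivity) h
        refine le_trans ?_ hlogge
        apply mul_le_mul_of_nonneg_right _ hlog3.le
        have h1 := cast_sub_ge (n-1) (2 * Nat.log 3 n + 4)
        have h2 : ((n-1:ℕ):ℝ) = (n:ℝ) - 1 := by
          rw [Nat.cast_sub hn]
          norm_num
        rw [h2] at h1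
        push_cast at h1 ⊢
        linarith
      calc (1 - (2 * (Nat.log 3 n : ℝ) + 5) / n) * Real.log 3
          = (1/(n:ℝ)) * (((n:ℝ) - (2 * Nat.log 3 n + 5)) * Real.log 3) := by
            field_simp
      _ ≤ (1/(n:ℝ)) * Real.log (f n) :=
            mul_le_mul_of_nonneg_left hflog (by positivity)
    · filter_upwards [eventually_ge_atTop 1] with n hn
      have hn0 : (0:ℝ) < n := by exact_mod_cast hn
      have hfp : (0:ℝ) < f n := by exact_mod_cast hfpos n hn
      have hloglen : Real.log (f n) ≤ n * Real.log 3 := by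
        calc Real.log (f n) ≤ Real.log ((3:ℝ)^n) := Real.log_le_log hfp (hup n hn)
        _ = n * Real.log 3 := Real.log_pow _ _
      calc (1/(n:ℝ)) * Real.log (f n) ≤ (1/(n:ℝ)) * ((n:ℝ) * Real.log 3) :=
            mul_le_mul_of_nonneg_left hloglen (by positivity)
      _ = Real.log 3 := by field_simp
  have partA : Filter.Tendsto (fun n : ℕ => (f n : ℝ) ^ ((1 : ℝ) / (n : ℝ))) atTop (nhds 3) := by
    have hexp : Filter.Tendsto (fun n : ℕ => Real.exp ((1/(n:ℝ)) * Real.log (f n))) atTop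
        (nhds (Real.exp (Real.log 3))) := (Real.continuous_exp.tendsto _).comp hkey
    rw [Real.exp_log h3pos] at hexp
    apply hexp.congr'
    filter_upwards [eventually_ge_atTop 1] with n hn
    have hfp : (0:ℝ) < f n := by exact_mod_cast hfpos n hn
    rw [Real.rpow_def_of_pos hfp, mul_comm]
  -- Part B
  have hmem : ∀ i : ℕ, (i = 1 ∨ i = 2 ∨ i = 3 ∨ i = 4) → i ∈ B := by
    intro i hi
    rw [hB]
    left
    simp only [Set.mem_insert_iff, Set.mem_singleton_iff]
    tauto
  have hsmall : ∀ m : ℕ, 1 ≤ m → f m ≤ 3 ^ ((m-1) - min (m-1) 4) := by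
    intro m hm
    rw [hf m hm]
    have hc : (Finset.Icc 1 (min (m-1) 4)).card = min (m-1) 4 := by
      rw [Nat.card_Icc]
      omega
    have h := prodLe (m-1) (Finset.Icc 1 (min (m-1) 4))
      (Finset.Icc_subset_Icc le_rfl (min_le_left _ _))
      (fun i hi => hmem i (by rw [Finset.mem_Icc] at hi; omega))
    rwa [hc] at h
  have hhead : ∑ n ∈ Finset.range 11, (f (n+1):ℝ)/3^(n+1) ≤ 381/729 := by
    have hb : ∀ n ∈ Finset.range 11, (f (n+1):ℝ)/3^(n+1) ≤ (3:ℝ)^(n - min n 4)/3^(n+1) := by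
      intro n _
      gcongr
      have h := hsmall (n+1) (by omega)
      simp only [Nat.add_sub_cancel] at h
      exact_mod_cast h
    calc ∑ n ∈ Finset.range 11, (f (n+1):ℝ)/3^(n+1)
        ≤ ∑ n ∈ Finset.range 11, (3:ℝ)^(n - min n 4)/3^(n+1) := Finset.sum_le_sum hb
    _ ≤ 381/729 := by
        norm_num [Finset.sum_range_succ]
  have htail : ∀ n : ℕ, (f (n+12):ℝ)/3^(n+12) ≤ 3 * ((1:ℝ)/((n:ℝ)+11) - 1/((n:ℝ)+12)) := by
    intro n
    set k := Nat.log 3 (n+9) with hkdef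
    have hk2 : 2 ≤ k := by
      rw [hkdef]
      refine (Nat.le_log_iff_pow_le (by norm_num) (by omega)).mpr ?_
      norm_num
    have hpk : 3^k ≤ n+9 := Nat.pow_log_le_self 3 (by omega)
    have hlt : n+9 < 3^(k+1) := Nat.lt_pow_succ_log_self (by norm_num) _
    have h2k' : 2*k+1 ≤ 3^k := two_mul_add_one_le_pow k
    have hsub : Sf15 k ⊆ Finset.Icc 1 (n+11) := by
      intro i hi
      rw [Finset.mem_Icc]
      have h1 := Sf15_one_le hi
      have h2 := Sf15_le (by omega) hi
      exact ⟨h1, by omega⟩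
    have hcard := Sf15_card_ge k (by omega)
    have hfle : f (n+12) ≤ 3 ^ ((n+9) - 2*k) := by
      have e : n+12-1 = n+11 := by omega
      rw [hf (n+12) (by omega), e]
      refine le_trans (prodLe (n+11) (Sf15 k) hsub (hSfB k)) ?_
      apply Nat.pow_le_pow_right (by norm_num)
      omega
    have hm : n + 12 ≤ 3^(k+2) := by
      have e1 : 3^(k+2) = 3 * 3^(k+1) := by ring
      omega
    have key : (f (n+12):ℝ)/3^(n+12) ≤ 3 / ((n:ℝ)+12)^2 := by
      rw [div_le_div_iff₀ (by positivity) (by positivity)]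
      have hnat : f (n+12) * (n+12)^2 ≤ 3 * 3^(n+12) := by
        calc f (n+12) * (n+12)^2 ≤ 3^((n+9)-2*k) * (3^(k+2))^2 :=
              Nat.mul_le_mul hfle (Nat.pow_le_pow_left hm 2)
        _ = 3^((n+9)-2*k) * 3^(2*k+4) := by
            rw [← pow_mul, show (k+2)*2 = 2*k+4 from by ring]
        _ = 3^(((n+9)-2*k) + (2*k+4)) := (pow_add 3 _ _).symm
        _ = 3^(n+13) := by
            congr 1
            omega
        _ = 3 * 3^(n+12) := by ring
      calc (f (n+12):ℝ) * ((n:ℝ)+12)^2 = ((f (n+12) * (n+12)^2 : ℕ) : ℝ) := by push_cast; ring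
      _ ≤ ((3 * 3^(n+12) : ℕ):ℝ) := by exact_mod_cast hnat
      _ = 3 * 3^(n+12) := by push_cast; ring
    refine le_trans key ?_
    have e : (1:ℝ)/((n:ℝ)+11) - 1/((n:ℝ)+12) = 1/(((n:ℝ)+11)*((n:ℝ)+12)) := by
      rw [div_sub_div _ _ (by positivity) (by positivity)]
      norm_num
    rw [e, mul_one_div]
    rw [div_le_div_iff₀ (by positivity) (by positivity)]
    nlinarith [Nat.cast_nonneg (α := ℝ) n]
  have htail_nonneg : ∀ n : ℕ, 0 ≤ (f (n+12):ℝ)/3^(n+12) := fun n => by positivity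
  have hpart : ∀ N : ℕ, ∑ n ∈ Finset.range N, (f (n+12):ℝ)/3^(n+12) ≤ 3/11 := by
    intro N
    calc ∑ n ∈ Finset.range N, (f (n+12):ℝ)/3^(n+12)
        ≤ ∑ n ∈ Finset.range N, 3 * ((1:ℝ)/((n:ℝ)+11) - 1/((n:ℝ)+12)) :=
          Finset.sum_le_sum (fun n _ => htail n)
    _ = 3 * ∑ n ∈ Finset.range N,
          ((fun i : ℕ => (1:ℝ)/((i:ℝ)+11)) n - (fun i : ℕ => (1:ℝ)/((i:ℝ)+11)) (n+1)) := by
        rw [Finset.mul_sum]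
        refine Finset.sum_congr rfl (fun n _ => ?_)
        push_cast
        ring
    _ = 3 * ((1:ℝ)/(((0:ℕ):ℝ)+11) - 1/(((N:ℕ):ℝ)+11)) := by
        rw [Finset.sum_range_sub' (fun i : ℕ => (1:ℝ)/((i:ℝ)+11)) N]
    _ ≤ 3/11 := by
        have h0 : (0:ℝ) ≤ ((N:ℝ)+11)⁻¹ := by positivity
        norm_num
        linarith
  have hsum_tail : Summable (fun n : ℕ => (f (n+12):ℝ)/3^(n+12)) :=
    summable_of_sum_range_le htail_nonneg hpart
  have htsum_tail : ∑' n : ℕ, (f (n+12):ℝ)/3^(n+12) ≤ 3/11 :=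
    Summable.tsum_le_of_sum_range_le hsum_tail hpart
  have hsummB : Summable (fun n : ℕ => (f (n+1):ℝ)/3^(n+1)) := by
    apply (summable_nat_add_iff 11).mp
    exact hsum_tail.congr (fun n => by
      have e : n + 12 = n + 11 + 1 := by omega
      rw [e])
  refine ⟨partA, hsummB, ?_⟩
  rw [← Summable.sum_add_tsum_nat_add 11 hsummB]
  have h2 : ∑' (i : ℕ), (f (i+11+1):ℝ)/3^(i+11+1) ≤ 3/11 := by
    have e := tsum_congr (L := SummationFilter.unconditional ℕ) (f := fun i : ℕ => (f (i+11+1):ℝ)/3^(i+11+1))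
      (g := fun i : ℕ => (f (i+12):ℝ)/3^(i+12))
      (fun i => by
        show (f (i+11+1):ℝ)/3^(i+11+1) = (f (i+12):ℝ)/3^(i+12)
        rw [show i+11+1 = i+12 from by omega])
    rw [e]
    exact htsum_tail
  calc ∑ n ∈ Finset.range 11, (f (n+1):ℝ)/3^(n+1) + ∑' (i : ℕ), (f (i+11+1):ℝ)/3^(i+11+1)
      ≤ 381/729 + 3/11 := add_le_add hhead h2
  _ < 1 := by norm_num
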